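/- For every connected graph G on n ≥ 4 vertices, π(G) ≤ l̄(G) ≤ ∂₁(G)/(n-1) ≤ ρ(G), where ∂₁ is the largest eigenvalue of the distance matrix; all equalities hold if and only if G is transmission regular. -/

import Mathlib

open SimpleGraph Finset

/-- The transmission of a vertex: the sum of distances from `v` to all other vertices. -/
noncomputable def transmission {n : ℕ} (G : SimpleGraph (Fin n)) (v : Fin n) : ℕ :=
  ∑ u, G.dist v u

/-- The proximity: the minimum average distance from a vertex to all others. -/
noncomputable def proximity {n : ℕ} (G : SimpleGraph (Fin n)) : ℝ :=
  sInf {x : ℝ | ∃ v : Fin n, x = transmission G v} / (n - 1)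

/-- The remoteness: the maximum average distance from a vertex to all others. -/
noncomputable def remoteness {n : ℕ} (G : SimpleGraph (Fin n)) : ℝ :=
  sSup {x : ℝ | ∃ v : Fin n, x = transmission G v} / (n - 1)

/-- The average distance between (ordered) pairs of distinct vertices. -/
noncomputable def avgDist {n : ℕ} (G : SimpleGraph (Fin n)) : ℝ :=
  (∑ u, ∑ v, (G.dist u v : ℝ)) / (n * (n - 1))

/-- The distance matrix of a graph. -/
noncomputable def distMatrix {n : ℕ} (G : SimpleGraph (Fin n)) : Matrix (Fin n) (Fin n) ℝ :=
  fun u v => (G.dist u v : ℝ)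

/-- The largest distance eigenvalue ∂₁. -/
noncomputable def maxDistEig {n : ℕ} (G : SimpleGraph (Fin n)) : ℝ :=
  sSup (spectrum ℝ (distMatrix G))

/-- The smallest distance eigenvalue ∂ₙ. -/
noncomputable def minDistEig {n : ℕ} (G : SimpleGraph (Fin n)) : ℝ :=
  sInf (spectrum ℝ (distMatrix G))

/-- A graph is transmission regular if all vertices have the same transmission. -/
def TransmissionRegular {n : ℕ} (G : SimpleGraph (Fin n)) : Prop :=
  ∀ u v : Fin n, transmission G u = transmission G v

section Aux

variable {n : ℕ} (G : SimpleGraph (Fin n))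

lemma distMatrix_isHermitian : (distMatrix G).IsHermitian := by
  ext u v
  simp [distMatrix, Matrix.conjTranspose_apply, SimpleGraph.dist_comm]

lemma rowSum_eq (v : Fin n) : ∑ u, distMatrix G v u = (transmission G v : ℝ) := by
  simp [distMatrix, transmission]

lemma spectrum_le_of_transmission_le {t : ℕ} (ht : ∀ v : Fin n, transmission G v ≤ t)
    {μ : ℝ} (hμ : μ ∈ spectrum ℝ (distMatrix G)) : μ ≤ (t : ℝ) := by
  rw [← AlgEquiv.spectrum_eq (Matrix.toLinAlgEquiv (Pi.basisFun ℝ (Fin n))),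
    ← Module.End.hasEigenvalue_iff_mem_spectrum] at hμ
  have hμ' : Module.End.HasEigenvalue (Matrix.toLin' (distMatrix G)) μ := by
    rwa [show (Matrix.toLinAlgEquiv (Pi.basisFun ℝ (Fin n)) (distMatrix G) :
        Module.End ℝ (Fin n → ℝ)) = Matrix.toLin' (distMatrix G) by
      rw [← Matrix.toLin_eq_toLin']; rfl] at hμ
  obtain ⟨k, hk⟩ := eigenvalue_mem_ball hμ'
  rw [Metric.mem_closedBall, Real.dist_eq] at hk
  have hdiag : distMatrix G k k = 0 := by simp [distMatrix]
  have hsum : ∑ j ∈ Finset.univ.erase k, ‖distMatrix G k j‖ ≤ (t : ℝ) := by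
    calc ∑ j ∈ Finset.univ.erase k, ‖distMatrix G k j‖
        ≤ ∑ j, ‖distMatrix G k j‖ := Finset.sum_le_sum_of_subset_of_nonneg
          (Finset.erase_subset _ _) (fun _ _ _ => norm_nonneg _)
      _ = (transmission G k : ℝ) := by
          rw [← rowSum_eq G k]
          exact Finset.sum_congr rfl fun j _ => by simp [distMatrix]
      _ ≤ t := by exact_mod_cast ht k
  rw [hdiag, sub_zero] at hk
  calc μ ≤ |μ| := le_abs_self μ
    _ ≤ t := le_trans hk hsum

lemma transmission_mem_spectrum (hn : 0 < n) {t : ℕ}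
    (ht : ∀ v : Fin n, transmission G v = t) :
    (t : ℝ) ∈ spectrum ℝ (distMatrix G) := by
  rw [← AlgEquiv.spectrum_eq (Matrix.toLinAlgEquiv (Pi.basisFun ℝ (Fin n))),
    ← Module.End.hasEigenvalue_iff_mem_spectrum]
  rw [show (Matrix.toLinAlgEquiv (Pi.basisFun ℝ (Fin n)) (distMatrix G) :
      Module.End ℝ (Fin n → ℝ)) = Matrix.toLin' (distMatrix G) by
    rw [← Matrix.toLin_eq_toLin']; rfl]
  apply Module.End.hasEigenvalue_of_hasEigenvector (x := fun _ => (1 : ℝ))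
  constructor
  · rw [Module.End.mem_eigenspace_iff]
    ext i
    simp only [Matrix.toLin'_apply, Matrix.mulVec, dotProduct, mul_one, Pi.smul_apply,
      smul_eq_mul]
    rw [← ht i]
    simp [distMatrix, transmission]
  · intro h
    have := congrFun h ⟨0, hn⟩
    simp at this

lemma avg_le_sSup_spectrum (hn : 0 < n)
    (hbd : BddAbove (spectrum ℝ (distMatrix G))) :
    (∑ u, ∑ v, (G.dist u v : ℝ)) / n ≤ sSup (spectrum ℝ (distMatrix G)) := by
  haveI : Nonempty (Fin n) := ⟨⟨0, hn⟩⟩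
  set E := EuclideanSpace ℝ (Fin n)
  haveI : Nontrivial E := by
    refine ⟨0, WithLp.toLp 2 (fun _ => 1 : Fin n → ℝ), fun h => ?_⟩
    have := congrArg (fun x : E => x ⟨0, hn⟩) h
    simp at this
  set A := distMatrix G with hA_def
  have hA := distMatrix_isHermitian G
  have hsym : (Matrix.toEuclideanLin A).IsSymmetric :=
    Matrix.isHermitian_iff_isSymmetric.1 hA
  have hev := hsym.hasEigenvalue_iSup_of_finiteDimensional
  set μ : ℝ := (⨆ x : {x : E // x ≠ 0},
    RCLike.re (inner ℝ ((Matrix.toEuclideanLin A) x) (x : E) : ℝ) / ‖(x : E)‖ ^ 2) with hμ_def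
  have hμmem : μ ∈ spectrum ℝ A := by
    rw [← Matrix.spectrum_toEuclideanLin (A := A) (𝕜 := ℝ)]
    have := Module.End.hasEigenvalue_iff_mem_spectrum.1 hev
    simpa using this
  refine le_trans ?_ (le_csSup hbd hμmem)
  set Tc := LinearMap.toContinuousLinearMap (Matrix.toEuclideanLin A) with hTc
  have hbdd : BddAbove (Set.range fun x : {x : E // x ≠ 0} =>
      RCLike.re (inner ℝ ((Matrix.toEuclideanLin A) x) (x : E) : ℝ) / ‖(x : E)‖ ^ 2) := by
    refine ⟨‖Tc‖, ?_⟩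
    rintro y ⟨x, rfl⟩
    have hx : (0 : ℝ) < ‖(x : E)‖ := norm_pos_iff.2 x.2
    rw [div_le_iff₀ (by positivity)]
    calc RCLike.re (inner ℝ ((Matrix.toEuclideanLin A) x) (x : E) : ℝ)
        = (inner ℝ ((Matrix.toEuclideanLin A) x) (x : E) : ℝ) := by simp
      _ ≤ ‖(Matrix.toEuclideanLin A) x‖ * ‖(x : E)‖ := real_inner_le_norm _ _
      _ = ‖Tc (x : E)‖ * ‖(x : E)‖ := rfl
      _ ≤ (‖Tc‖ * ‖(x : E)‖) * ‖(x : E)‖ := by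
          have := Tc.le_opNorm (x : E)
          nlinarith [norm_nonneg (Tc (x : E))]
      _ = ‖Tc‖ * ‖(x : E)‖ ^ 2 := by ring
  set x₁ : E := WithLp.toLp 2 (fun _ => (1 : ℝ) : Fin n → ℝ) with hx₁
  have hx₁ne : x₁ ≠ 0 := by
    intro h
    have := congrArg (fun x : E => x ⟨0, hn⟩) h
    simp [hx₁] at this
  have hkey := le_ciSup hbdd ⟨x₁, hx₁ne⟩
  rw [← hμ_def] at hkey
  refine le_trans (le_of_eq ?_) hkey
  have hinner : (inner ℝ ((Matrix.toEuclideanLin A) x₁) x₁ : ℝ)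
      = ∑ u, ∑ v, (G.dist u v : ℝ) := by
    rw [PiLp.inner_apply]
    simp only [RCLike.inner_apply, conj_trivial]
    have happ : ∀ i, ((Matrix.toEuclideanLin A) x₁) i = ∑ v, (G.dist i v : ℝ) := by
      intro i
      simp [Matrix.toEuclideanLin_apply, Matrix.mulVec, dotProduct, hA_def, distMatrix, hx₁]
    refine Finset.sum_congr rfl fun u _ => ?_
    rw [happ u]
    simp [hx₁]
  have hnorm : ‖x₁‖ ^ 2 = (n : ℝ) := by
    rw [← real_inner_self_eq_norm_sq, PiLp.inner_apply]
    simp [hx₁]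
  rw [hinner, hnorm]
  simp

lemma transmission_set_eq :
    {x : ℝ | ∃ v : Fin n, x = transmission G v}
      = Set.range (fun v : Fin n => (transmission G v : ℝ)) := by
  ext x
  simp [eq_comm]

end Aux

theorem proximity_avgDist_maxDistEig_remoteness {n : ℕ} (hn : 4 ≤ n)
    (G : SimpleGraph (Fin n)) (hG : G.Connected) :
    (proximity G ≤ avgDist G ∧ avgDist G ≤ maxDistEig G / (n - 1) ∧
      maxDistEig G / (n - 1) ≤ remoteness G) ∧
    ((proximity G = avgDist G ∧ avgDist G = maxDistEig G / (n - 1) ∧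
      maxDistEig G / (n - 1) = remoteness G) ↔ TransmissionRegular G) := by
  have hn0 : 0 < n := by omega
  haveI : Nonempty (Fin n) := ⟨⟨0, hn0⟩⟩
  have hcpos : (0 : ℝ) < (n : ℝ) - 1 := by
    have : (4 : ℝ) ≤ n := by exact_mod_cast hn
    linarith
  have hnpos : (0 : ℝ) < (n : ℝ) := by positivity
  -- max and min transmission vertices
  obtain ⟨vmax, -, hvmax⟩ := Finset.exists_max_image (Finset.univ : Finset (Fin n))
    (transmission G) ⟨⟨0, hn0⟩, Finset.mem_univ _⟩
  obtain ⟨vmin, -, hvmin⟩ := Finset.exists_min_image (Finset.univ : Finset (Fin n))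
    (transmission G) ⟨⟨0, hn0⟩, Finset.mem_univ _⟩
  have hvmax' : ∀ u : Fin n, transmission G u ≤ transmission G vmax :=
    fun u => hvmax u (Finset.mem_univ u)
  have hvmin' : ∀ u : Fin n, transmission G vmin ≤ transmission G u :=
    fun u => hvmin u (Finset.mem_univ u)
  -- the set of transmissions
  have hset := transmission_set_eq G
  have hbddS : BddAbove {x : ℝ | ∃ v : Fin n, x = transmission G v} := by
    rw [hset]; exact (Set.finite_range _).bddAbove
  have hbddSb : BddBelow {x : ℝ | ∃ v : Fin n, x = transmission G v} := by
    rw [hset]; exact (Set.finite_range _).bddBelow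
  have hSne : {x : ℝ | ∃ v : Fin n, x = transmission G v}.Nonempty :=
    ⟨_, ⟨vmax, rfl⟩⟩
  have hsSup : sSup {x : ℝ | ∃ v : Fin n, x = transmission G v}
      = (transmission G vmax : ℝ) := by
    apply le_antisymm
    · apply csSup_le hSne
      rintro x ⟨u, rfl⟩
      exact_mod_cast hvmax' u
    · exact le_csSup hbddS ⟨vmax, rfl⟩
  have hsInf : sInf {x : ℝ | ∃ v : Fin n, x = transmission G v}
      = (transmission G vmin : ℝ) := by
    apply le_antisymm
    · exact csInf_le hbddSb ⟨vmin, rfl⟩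
    · apply le_csInf hSne
      rintro x ⟨u, rfl⟩
      exact_mod_cast hvmin' u
  -- spectrum facts
  have hspecbd : ∀ μ ∈ spectrum ℝ (distMatrix G), μ ≤ (transmission G vmax : ℝ) :=
    fun μ hμ => spectrum_le_of_transmission_le G hvmax' hμ
  have hbdspec : BddAbove (spectrum ℝ (distMatrix G)) :=
    ⟨(transmission G vmax : ℝ), fun μ hμ => hspecbd μ hμ⟩
  have hspecne : (spectrum ℝ (distMatrix G)).Nonempty :=
    ⟨_, (distMatrix_isHermitian G).eigenvalues_mem_spectrum_real ⟨0, hn0⟩⟩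
  -- total sum
  set S : ℝ := ∑ u, ∑ v, (G.dist u v : ℝ) with hS_def
  have hS_eq : S = ∑ u, (transmission G u : ℝ) := by
    refine Finset.sum_congr rfl fun u _ => ?_
    rw [← rowSum_eq G u]
    rfl
  -- the four key quantities
  have h12 : (transmission G vmin : ℝ) ≤ S / n := by
    rw [le_div_iff₀ hnpos, hS_eq]
    calc (transmission G vmin : ℝ) * n = ∑ _u : Fin n, (transmission G vmin : ℝ) := by
          simp [mul_comm]
      _ ≤ ∑ u, (transmission G u : ℝ) :=
          Finset.sum_le_sum fun u _ => by exact_mod_cast hvmin' u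
  have h23 : S / n ≤ sSup (spectrum ℝ (distMatrix G)) :=
    avg_le_sSup_spectrum G hn0 hbdspec
  have h34 : sSup (spectrum ℝ (distMatrix G)) ≤ (transmission G vmax : ℝ) :=
    csSup_le hspecne hspecbd
  -- rewrite the definitions
  have havg : avgDist G = (S / n) / ((n : ℝ) - 1) := by
    rw [avgDist, div_div]
  have hprox : proximity G = (transmission G vmin : ℝ) / ((n : ℝ) - 1) := by
    rw [proximity, hsInf]
  have hrem : remoteness G = (transmission G vmax : ℝ) / ((n : ℝ) - 1) := by
    rw [remoteness, hsSup]
  have hmde : maxDistEig G / ((n : ℝ) - 1)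
      = sSup (spectrum ℝ (distMatrix G)) / ((n : ℝ) - 1) := rfl
  refine ⟨⟨?_, ?_, ?_⟩, ?_, ?_⟩
  · rw [hprox, havg]
    exact div_le_div_of_nonneg_right h12 hcpos.le
  · rw [havg, hmde]
    exact div_le_div_of_nonneg_right h23 hcpos.le
  · rw [hrem, hmde]
    exact div_le_div_of_nonneg_right h34 hcpos.le
  · -- equalities imply transmission regular
    rintro ⟨h1, h2, h3⟩
    have hchain : proximity G = remoteness G := by rw [h1, h2, h3]
    rw [hprox, hrem, div_eq_div_iff (ne_of_gt hcpos) (ne_of_gt hcpos)] at hchain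
    have heq : transmission G vmin = transmission G vmax := by
      have h' : (transmission G vmin : ℝ) = transmission G vmax :=
        mul_right_cancel₀ (ne_of_gt hcpos) hchain
      exact_mod_cast h'
    intro u v
    have hu : transmission G u = transmission G vmax :=
      le_antisymm (hvmax' u) (heq ▸ hvmin' u)
    have hv : transmission G v = transmission G vmax :=
      le_antisymm (hvmax' v) (heq ▸ hvmin' v)
    rw [hu, hv]
  · -- transmission regular implies equalities
    intro hreg
    set t : ℕ := transmission G vmax with ht_def
    have hall : ∀ v : Fin n, transmission G v = t := fun v => hreg v vmax
    have hsSup_spec : sSup (spectrum ℝ (distMatrix G)) = (t : ℝ) := by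
      apply le_antisymm
      · exact csSup_le hspecne fun μ hμ =>
          spectrum_le_of_transmission_le G (fun v => le_of_eq (hall v)) hμ
      · exact le_csSup hbdspec (transmission_mem_spectrum G hn0 hall)
    have hS_nt : S = (n : ℝ) * t := by
      rw [hS_eq]
      simp [hall]
    have hSn : S / n = (t : ℝ) := by
      rw [hS_nt, mul_div_cancel_left₀ _ (ne_of_gt hnpos)]
    have hmin_t : transmission G vmin = t := hall vmin
    refine ⟨?_, ?_, ?_⟩
    · rw [hprox, havg, hSn, hmin_t]
    · rw [havg, hmde, hSn, hsSup_spec]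
    · rw [hrem, hmde, hsSup_spec]
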